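/- Let n ≥ 6 and let i be an integer with ⌈n/3⌉ ≤ i ≤ ⌊n/2⌋. Then the number of accurate dominating sets of the path P_n of cardinality i satisfies d_a(P_n, i) ≤ d_a(P_{n−2}, i−1) + d_a(P_{n−3}, i−1) + d_a(P_{n−4}, i−2) + Σ_{k=3}^{i} d(P_{n−k}, i−k+1) + Σ_{k=5}^{i+1} d(P_{n−k}, i−k+2) (a sum over an empty index range is 0). -/

import Mathlib

/-- `D` is a dominating set of the simple graph `G`: every vertex not in `D`
is adjacent to at least one vertex in `D`. -/
def IsDomSet {V : Type*} (G : SimpleGraph V) (D : Finset V) : Prop :=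
  ∀ v : V, v ∉ D → ∃ u ∈ D, G.Adj u v

/-- `D` is an accurate dominating set of `G`: a dominating set such that no subset of
`V \ D` of cardinality `|D|` is a dominating set of `G`. -/
def IsAccDomSet {V : Type*} (G : SimpleGraph V) (D : Finset V) : Prop :=
  IsDomSet G D ∧
    ∀ E : Finset V, (∀ v ∈ E, v ∉ D) → E.card = D.card → ¬ IsDomSet G E

/-- The domination number of `G`: the minimum cardinality of a dominating set. -/
noncomputable def domNum {V : Type*} (G : SimpleGraph V) : ℕ :=
  sInf {k | ∃ D : Finset V, IsDomSet G D ∧ D.card = k}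

/-- The accurate domination number of `G`: the minimum cardinality of an accurate
dominating set. -/
noncomputable def accDomNum {V : Type*} (G : SimpleGraph V) : ℕ :=
  sInf {k | ∃ D : Finset V, IsAccDomSet G D ∧ D.card = k}

/-- `d(G,i)`: the number of dominating sets of `G` of cardinality `i`. -/
noncomputable def numDomSets {V : Type*} (G : SimpleGraph V) (i : ℕ) : ℕ :=
  Set.ncard {D : Finset V | IsDomSet G D ∧ D.card = i}

/-- `d_a(G,i)`: the number of accurate dominating sets of `G` of cardinality `i`. -/
noncomputable def numAccDomSets {V : Type*} (G : SimpleGraph V) (i : ℕ) : ℕ :=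
  Set.ncard {D : Finset V | IsAccDomSet G D ∧ D.card = i}

namespace PathAcc

open Finset

/-- ℕ-version of domination on the path with `n` vertices `0,…,n-1`. -/
def NDom (n : ℕ) (D : Finset ℕ) : Prop :=
  ∀ v, v < n → v ∉ D → (1 ≤ v ∧ v - 1 ∈ D) ∨ (v + 1 < n ∧ v + 1 ∈ D)

/-- ℕ-version of accurate domination. -/
def NAcc (n i : ℕ) (D : Finset ℕ) : Prop :=
  NDom n D ∧ ∀ E : Finset ℕ, E ⊆ Finset.range n → (∀ v ∈ E, v ∉ D) →
    E.card = i → ¬ NDom n E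

def DomN (n i : ℕ) : Set (Finset ℕ) :=
  {D | D ⊆ Finset.range n ∧ NDom n D ∧ D.card = i}

def AccN (n i : ℕ) : Set (Finset ℕ) :=
  {D | D ⊆ Finset.range n ∧ NAcc n i D ∧ D.card = i}

/-! ### Transfer between `Fin n` and `ℕ` versions -/

def vmap {m : ℕ} (S : Finset (Fin m)) : Finset ℕ := S.map ⟨Fin.val, Fin.val_injective⟩

lemma vmap_inj {m : ℕ} : Function.Injective (@vmap m) := Finset.map_injective _

lemma mem_vmap' {m : ℕ} {S : Finset (Fin m)} {u : Fin m} : (u : ℕ) ∈ vmap S ↔ u ∈ S := by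
  simp [vmap, Fin.val_inj]

lemma vmap_card {m : ℕ} (S : Finset (Fin m)) : (vmap S).card = S.card := Finset.card_map _

lemma vmap_subset_range {m : ℕ} (S : Finset (Fin m)) : vmap S ⊆ Finset.range m := by
  intro v hv
  simp only [vmap, Finset.mem_map, Function.Embedding.coeFn_mk] at hv
  obtain ⟨u, _, rfl⟩ := hv
  exact Finset.mem_range.2 u.isLt

lemma vmap_attachFin {m : ℕ} (T : Finset ℕ) (hT : ∀ v ∈ T, v < m) :
    vmap (T.attachFin hT) = T := by
  ext v
  simp only [vmap, Finset.mem_map, Function.Embedding.coeFn_mk]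
  constructor
  · rintro ⟨u, hu, rfl⟩; exact (Finset.mem_attachFin hT).1 hu
  · intro hv; exact ⟨⟨v, hT v hv⟩, (Finset.mem_attachFin hT).2 hv, rfl⟩

lemma isDom_iff {m : ℕ} (S : Finset (Fin m)) :
    IsDomSet (SimpleGraph.pathGraph m) S ↔ NDom m (vmap S) := by
  constructor
  · intro h v hv hvS
    have hu : (⟨v, hv⟩ : Fin m) ∉ S := fun hm => hvS (mem_vmap'.2 hm)
    obtain ⟨u, huS, hadj⟩ := h _ hu
    rw [SimpleGraph.pathGraph_adj] at hadj
    have hadj' : (u : ℕ) + 1 = v ∨ v + 1 = (u : ℕ) := by simpa using hadj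
    have humem : (u : ℕ) ∈ vmap S := mem_vmap'.2 huS
    rcases hadj' with hadj | hadj
    · exact Or.inl ⟨by omega, by simpa [show v - 1 = (u : ℕ) by omega] using humem⟩
    · exact Or.inr ⟨by simpa [show v + 1 = (u : ℕ) by omega] using u.isLt,
        by simpa [show v + 1 = (u : ℕ) by omega] using humem⟩
  · intro h u huS
    have hv : (u : ℕ) ∉ vmap S := fun hm => huS (mem_vmap'.1 hm)
    rcases h u u.isLt hv with ⟨h1, hm⟩ | ⟨h1, hm⟩
    · simp only [vmap, Finset.mem_map, Function.Embedding.coeFn_mk] at hm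
      obtain ⟨w, hwS, hw⟩ := hm
      exact ⟨w, hwS, by rw [SimpleGraph.pathGraph_adj]; omega⟩
    · simp only [vmap, Finset.mem_map, Function.Embedding.coeFn_mk] at hm
      obtain ⟨w, hwS, hw⟩ := hm
      exact ⟨w, hwS, by rw [SimpleGraph.pathGraph_adj]; omega⟩

lemma numDomSets_eq (m j : ℕ) :
    numDomSets (SimpleGraph.pathGraph m) j = (DomN m j).ncard := by
  have himg : vmap '' {D : Finset (Fin m) | IsDomSet (SimpleGraph.pathGraph m) D ∧ D.card = j}
      = DomN m j := by
    ext T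
    constructor
    · rintro ⟨S, ⟨hdom, hcard⟩, rfl⟩
      exact ⟨vmap_subset_range S, (isDom_iff S).1 hdom, by rw [vmap_card]; exact hcard⟩
    · rintro ⟨hT1, hT2, hT3⟩
      have hTlt : ∀ v ∈ T, v < m := fun v hv => Finset.mem_range.1 (hT1 hv)
      refine ⟨T.attachFin hTlt, ⟨?_, ?_⟩, vmap_attachFin T hTlt⟩
      · rw [isDom_iff, vmap_attachFin]; exact hT2
      · rw [← vmap_card, vmap_attachFin]; exact hT3
  rw [numDomSets, ← himg, Set.ncard_image_of_injective _ vmap_inj]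

lemma isAcc_iff {m j : ℕ} (S : Finset (Fin m)) (hcard : S.card = j) :
    IsAccDomSet (SimpleGraph.pathGraph m) S ↔ NAcc m j (vmap S) := by
  constructor
  · rintro ⟨hdom, hacc⟩
    refine ⟨(isDom_iff S).1 hdom, ?_⟩
    intro E hEr hEd hEc hEdom
    have hElt : ∀ v ∈ E, v < m := fun v hv => Finset.mem_range.1 (hEr hv)
    refine hacc (E.attachFin hElt) ?_ ?_ ?_
    · intro u hu huS
      exact hEd _ ((Finset.mem_attachFin hElt).1 hu) (mem_vmap'.2 huS)
    · rw [Finset.card_attachFin, hEc, hcard]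
    · rw [isDom_iff, vmap_attachFin]; exact hEdom
  · rintro ⟨hdom, hacc⟩
    refine ⟨(isDom_iff S).2 hdom, ?_⟩
    intro E hEd hEc hEdom
    refine hacc (vmap E) (vmap_subset_range E) ?_ ?_ ((isDom_iff E).1 hEdom)
    · intro v hv hvS
      simp only [vmap, Finset.mem_map, Function.Embedding.coeFn_mk] at hv
      obtain ⟨u, huE, rfl⟩ := hv
      exact hEd u huE (mem_vmap'.1 hvS)
    · rw [vmap_card, hEc, hcard]

lemma numAccDomSets_eq (m j : ℕ) :
    numAccDomSets (SimpleGraph.pathGraph m) j = (AccN m j).ncard := by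
  have himg : vmap '' {D : Finset (Fin m) | IsAccDomSet (SimpleGraph.pathGraph m) D ∧ D.card = j}
      = AccN m j := by
    ext T
    constructor
    · rintro ⟨S, ⟨hacc, hcard⟩, rfl⟩
      exact ⟨vmap_subset_range S, (isAcc_iff S hcard).1 hacc, by rw [vmap_card]; exact hcard⟩
    · rintro ⟨hT1, hT2, hT3⟩
      have hTlt : ∀ v ∈ T, v < m := fun v hv => Finset.mem_range.1 (hT1 hv)
      have hc : (T.attachFin hTlt).card = j := by
        rw [← vmap_card, vmap_attachFin]; exact hT3
      refine ⟨T.attachFin hTlt, ⟨?_, hc⟩, vmap_attachFin T hTlt⟩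
      rw [isAcc_iff _ hc, vmap_attachFin]; exact hT2
  rw [numAccDomSets, ← himg, Set.ncard_image_of_injective _ vmap_inj]


def sh (k : ℕ) (D : Finset ℕ) : Finset ℕ :=
  (D.filter (fun v => k ≤ v)).image (fun v => v - k)

lemma mem_sh {k : ℕ} {D : Finset ℕ} {v : ℕ} : v ∈ sh k D ↔ v + k ∈ D := by
  simp only [sh, Finset.mem_image, Finset.mem_filter]
  constructor
  · rintro ⟨u, ⟨hu, hku⟩, rfl⟩
    rwa [Nat.sub_add_cancel hku]
  · intro h
    exact ⟨v + k, ⟨h, by omega⟩, by omega⟩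

lemma sh_card {k : ℕ} {D : Finset ℕ} :
    (sh k D).card = (D.filter (fun v => k ≤ v)).card := by
  refine Finset.card_image_of_injOn ?_
  intro a ha b hb hab
  simp only [Finset.coe_filter, Set.mem_setOf_eq] at ha hb
  dsimp only at hab
  omega

lemma sh_subset_range {n k : ℕ} {D : Finset ℕ} (h : D ⊆ Finset.range n) :
    sh k D ⊆ Finset.range (n - k) := by
  intro v hv
  rw [mem_sh] at hv
  have := Finset.mem_range.1 (h hv)
  exact Finset.mem_range.2 (by omega)

lemma NDom_sh {n k : ℕ} {D : Finset ℕ} (hk : 1 ≤ k) (hr : D ⊆ Finset.range n)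
    (hD : NDom n D) (h0 : k - 1 ∉ D ∨ k + 1 ∈ D) : NDom (n - k) (sh k D) := by
  intro v hv hvD
  rw [mem_sh] at hvD
  rcases Nat.eq_zero_or_pos v with rfl | hvpos
  · have hkD : k ∉ D := by simpa using hvD
    have hgoal : k + 1 ∈ D := by
      rcases h0 with h0 | h0
      · rcases hD k (by omega) hkD with ⟨_, hm⟩ | ⟨_, hm⟩
        · exact absurd hm h0
        · exact hm
      · exact h0
    have hlt := Finset.mem_range.1 (hr hgoal)
    refine Or.inr ⟨by omega, mem_sh.2 ?_⟩
    have h01 : 0 + 1 + k = k + 1 := by omega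
    rw [h01]; exact hgoal
  · rcases hD (v + k) (by omega) hvD with ⟨_, hm⟩ | ⟨h1, hm⟩
    · left
      refine ⟨hvpos, mem_sh.2 ?_⟩
      have : v - 1 + k = v + k - 1 := by omega
      rw [this]; exact hm
    · right
      refine ⟨by omega, mem_sh.2 ?_⟩
      have : v + 1 + k = v + k + 1 := by omega
      rw [this]; exact hm

def lf (k : ℕ) (E : Finset ℕ) : Finset ℕ := E.image (fun v => v + k)

lemma mem_lf {k : ℕ} {E : Finset ℕ} {v : ℕ} : v ∈ lf k E ↔ k ≤ v ∧ v - k ∈ E := by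
  simp only [lf, Finset.mem_image]
  constructor
  · rintro ⟨u, hu, rfl⟩
    exact ⟨by omega, by simpa [Nat.add_sub_cancel] using hu⟩
  · rintro ⟨h1, h2⟩
    exact ⟨v - k, h2, by omega⟩

lemma lf_card {k : ℕ} {E : Finset ℕ} : (lf k E).card = E.card :=
  Finset.card_image_of_injective _ (fun a b h => by omega)

lemma lf_subset_range {n k : ℕ} {E : Finset ℕ} (hE : E ⊆ Finset.range (n - k)) :
    lf k E ⊆ Finset.range n := by
  intro v hv
  rw [mem_lf] at hv
  have := Finset.mem_range.1 (hE hv.2)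
  exact Finset.mem_range.2 (by omega)

lemma lf_disj {k : ℕ} {E D : Finset ℕ} (h : ∀ v ∈ E, v ∉ sh k D) :
    ∀ v ∈ lf k E, v ∉ D := by
  intro v hv hvD
  rw [mem_lf] at hv
  exact h _ hv.2 (mem_sh.2 (by rwa [Nat.sub_add_cancel hv.1]))

lemma NDom_lf {n k : ℕ} {E extra : Finset ℕ} (hkn : k < n)
    (hE : E ⊆ Finset.range (n - k)) (hND : NDom (n - k) E)
    (hex : ∀ v ∈ extra, v < k)
    (hsm : ∀ v, v < k → v ∉ extra →
      (1 ≤ v ∧ v - 1 ∈ extra) ∨ (v + 1 ∈ extra) ∨ (v + 1 = k ∧ 0 ∈ E)) :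
    NDom n (lf k E ∪ extra) := by
  intro v hv hvm
  simp only [Finset.mem_union, not_or] at hvm
  obtain ⟨hv1, hv2⟩ := hvm
  by_cases hvk : v < k
  · rcases hsm v hvk hv2 with ⟨ha, hb⟩ | h | ⟨ha, hb⟩
    · exact Or.inl ⟨ha, Finset.mem_union_right _ hb⟩
    · exact Or.inr ⟨by have := hex _ h; omega, Finset.mem_union_right _ h⟩
    · refine Or.inr ⟨by omega, Finset.mem_union_left _ (mem_lf.2 ⟨by omega, ?_⟩)⟩
      simpa [ha] using hb
  · push_neg at hvk
    have hvE : v - k ∉ E := fun h => hv1 (mem_lf.2 ⟨hvk, h⟩)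
    rcases hND (v - k) (by omega) hvE with ⟨ha, hb⟩ | ⟨ha, hb⟩
    · refine Or.inl ⟨by omega, Finset.mem_union_left _ (mem_lf.2 ⟨by omega, ?_⟩)⟩
      have : v - 1 - k = v - k - 1 := by omega
      rw [this]; exact hb
    · refine Or.inr ⟨by omega, Finset.mem_union_left _ (mem_lf.2 ⟨by omega, ?_⟩)⟩
      have : v + 1 - k = v - k + 1 := by omega
      rw [this]; exact hb

lemma eq_of_sh_eq {k : ℕ} {D1 D2 : Finset ℕ} (h : sh k D1 = sh k D2)
    (hlow : ∀ v, v < k → (v ∈ D1 ↔ v ∈ D2)) : D1 = D2 := by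
  ext v
  by_cases hv : v < k
  · exact hlow v hv
  · have h1 : v - k ∈ sh k D1 ↔ v - k ∈ sh k D2 := by rw [h]
    rw [mem_sh, mem_sh, Nat.sub_add_cancel (by omega)] at h1
    exact h1

lemma sh_eq_high {k : ℕ} {D1 D2 : Finset ℕ} (h : sh k D1 = sh k D2) :
    ∀ v, k ≤ v → (v ∈ D1 ↔ v ∈ D2) := by
  intro v hv
  have h1 : v - k ∈ sh k D1 ↔ v - k ∈ sh k D2 := by rw [h]
  rwa [mem_sh, mem_sh, Nat.sub_add_cancel hv] at h1

/-- Extract a witness from failed accuracy. -/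
lemma not_NAcc_witness {m j : ℕ} {S : Finset ℕ} (hND : NDom m S) (h : ¬ NAcc m j S) :
    ∃ E : Finset ℕ, E ⊆ Finset.range m ∧ (∀ v ∈ E, v ∉ S) ∧ E.card = j ∧ NDom m E := by
  rw [NAcc, not_and] at h
  have := h hND
  push_neg at this
  obtain ⟨E, h1, h2, h3, h4⟩ := this
  exact ⟨E, h1, h2, h3, h4⟩


/-! ### The families -/

def famA (n i : ℕ) : Set (Finset ℕ) := {D | D ∈ AccN n i ∧ 0 ∈ D ∧ 1 ∉ D}

def famBB (n i : ℕ) : Set (Finset ℕ) :=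
  {D | D ∈ AccN n i ∧ 0 ∉ D ∧ 1 ∈ D ∧ 2 ∉ D ∧ ¬ NAcc (n - 3) (i - 1) (sh 3 D)}

def famBG (n i : ℕ) : Set (Finset ℕ) :=
  {D | D ∈ AccN n i ∧ 0 ∉ D ∧ 1 ∈ D ∧ 2 ∉ D ∧ NAcc (n - 3) (i - 1) (sh 3 D)}

def famC (n i : ℕ) : Set (Finset ℕ) :=
  {D | D ∈ AccN n i ∧ 0 ∉ D ∧ 1 ∈ D ∧ 2 ∈ D ∧ 3 ∉ D}

def famG1 (n i k : ℕ) : Set (Finset ℕ) :=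
  {D | D ∈ AccN n i ∧ (∀ j, j < k - 1 → j ∈ D) ∧ k - 1 ∉ D}

def famG2 (n i k : ℕ) : Set (Finset ℕ) :=
  {D | D ∈ AccN n i ∧ 0 ∉ D ∧ (∀ j, 1 ≤ j → j < k - 1 → j ∈ D) ∧ k - 1 ∉ D}

lemma sh_card_eq {k i : ℕ} {D low : Finset ℕ} (hc : D.card = i)
    (hlow : D.filter (fun v => ¬ k ≤ v) = low) : (sh k D).card = i - low.card := by
  have h := Finset.card_filter_add_card_filter_not (s := D) (p := fun v => k ≤ v)
  rw [hlow, hc] at h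
  rw [sh_card]
  omega

/-! ### Family A -/

lemma famA_maps {n i : ℕ} (hn : 6 ≤ n) :
    ∀ D ∈ famA n i, sh 2 D ∈ AccN (n - 2) (i - 1) := by
  rintro D ⟨⟨hDr, ⟨hdom, hacc⟩, hcard⟩, h0, h1⟩
  have hi1 : 1 ≤ i := by rw [← hcard]; exact Finset.card_pos.2 ⟨0, h0⟩
  have hlow : D.filter (fun v => ¬ 2 ≤ v) = {0} := by
    ext v
    simp only [Finset.mem_filter, Finset.mem_singleton, not_le]
    constructor
    · rintro ⟨hvD, hv⟩
      rcases (show v = 0 ∨ v = 1 by omega) with rfl | rfl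
      · rfl
      · exact absurd hvD h1
    · rintro rfl; exact ⟨h0, by omega⟩
  refine ⟨sh_subset_range hDr, ⟨NDom_sh (by omega) hDr hdom (Or.inl h1), ?_⟩, ?_⟩
  · intro F hFr hFd hFc hFdom
    have hdisj : Disjoint (lf 2 F) ({1} : Finset ℕ) :=
      Finset.disjoint_singleton_right.2 (by simp [mem_lf])
    refine hacc (lf 2 F ∪ {1}) ?_ ?_ ?_ (NDom_lf (by omega) hFr hFdom ?_ ?_)
    · intro v hv
      rcases Finset.mem_union.1 hv with hv | hv
      · exact lf_subset_range hFr hv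
      · simp only [Finset.mem_singleton] at hv
        exact Finset.mem_range.2 (by omega)
    · intro v hv
      rcases Finset.mem_union.1 hv with hv | hv
      · exact lf_disj hFd v hv
      · simp only [Finset.mem_singleton] at hv; subst hv; exact h1
    · rw [Finset.card_union_of_disjoint hdisj, lf_card, hFc, Finset.card_singleton]
      omega
    · intro v hv; simp only [Finset.mem_singleton] at hv; omega
    · intro v hv hv1
      simp only [Finset.mem_singleton] at hv1
      have : v = 0 := by omega
      subst this
      exact Or.inr (Or.inl (by simp))
  · rw [sh_card_eq hcard hlow, Finset.card_singleton]

/-! ### Family BB -/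

lemma claimA {n i : ℕ} (hn : 6 ≤ n) {D : Finset ℕ} (hD : D ∈ famBB n i) : 3 ∈ D := by
  obtain ⟨⟨hDr, ⟨hdom, hacc⟩, hcard⟩, h0, h1, h2, hnacc⟩ := hD
  have hi1 : 1 ≤ i := by rw [← hcard]; exact Finset.card_pos.2 ⟨1, h1⟩
  by_contra h3
  have hND3 : NDom (n - 3) (sh 3 D) := NDom_sh (by omega) hDr hdom (Or.inl h2)
  obtain ⟨E, hEr, hEd, hEc, hEdom⟩ := not_NAcc_witness hND3 hnacc
  have h4 : 4 ∈ D := by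
    rcases hdom 3 (by omega) h3 with ⟨_, hm⟩ | ⟨_, hm⟩
    · exact absurd (show (2 : ℕ) ∈ D from hm) h2
    · exact hm
  by_cases h0E : 0 ∈ E
  · have hdisj : Disjoint (lf 3 E) ({0} : Finset ℕ) :=
      Finset.disjoint_singleton_right.2 (by simp [mem_lf])
    refine hacc (lf 3 E ∪ {0}) ?_ ?_ ?_ (NDom_lf (by omega) hEr hEdom ?_ ?_)
    · intro v hv
      rcases Finset.mem_union.1 hv with hv | hv
      · exact lf_subset_range hEr hv
      · simp only [Finset.mem_singleton] at hv
        exact Finset.mem_range.2 (by omega)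
    · intro v hv
      rcases Finset.mem_union.1 hv with hv | hv
      · exact lf_disj hEd v hv
      · simp only [Finset.mem_singleton] at hv; subst hv; exact h0
    · rw [Finset.card_union_of_disjoint hdisj, lf_card, hEc, Finset.card_singleton]
      omega
    · intro v hv; simp only [Finset.mem_singleton] at hv; omega
    · intro v hv hv1
      simp only [Finset.mem_singleton] at hv1
      rcases (show v = 1 ∨ v = 2 by omega) with rfl | rfl
      · exact Or.inl ⟨by omega, by simp⟩
      · exact Or.inr (Or.inr ⟨by omega, h0E⟩)
  · rcases hEdom 0 (by omega) h0E with ⟨ha, _⟩ | ⟨_, hb⟩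
    · omega
    · exact hEd 1 (by simpa using hb) (mem_sh.2 (show (1 : ℕ) + 3 ∈ D by norm_num [h4]))

lemma famBB_maps {n i : ℕ} (hn : 6 ≤ n) :
    ∀ D ∈ famBB n i, sh 2 D ∈ AccN (n - 2) (i - 1) := by
  intro D hD
  have h3 := claimA hn hD
  obtain ⟨⟨hDr, ⟨hdom, hacc⟩, hcard⟩, h0, h1, h2, _⟩ := hD
  have hi1 : 1 ≤ i := by rw [← hcard]; exact Finset.card_pos.2 ⟨1, h1⟩
  have hlow : D.filter (fun v => ¬ 2 ≤ v) = {1} := by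
    ext v
    simp only [Finset.mem_filter, Finset.mem_singleton, not_le]
    constructor
    · rintro ⟨hvD, hv⟩
      rcases (show v = 0 ∨ v = 1 by omega) with rfl | rfl
      · exact absurd hvD h0
      · rfl
    · rintro rfl; exact ⟨h1, by omega⟩
  refine ⟨sh_subset_range hDr,
    ⟨NDom_sh (by omega) hDr hdom (Or.inr (show (2 : ℕ) + 1 ∈ D by norm_num [h3])), ?_⟩, ?_⟩
  · intro F hFr hFd hFc hFdom
    have hdisj : Disjoint (lf 2 F) ({0} : Finset ℕ) :=
      Finset.disjoint_singleton_right.2 (by simp [mem_lf])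
    refine hacc (lf 2 F ∪ {0}) ?_ ?_ ?_ (NDom_lf (by omega) hFr hFdom ?_ ?_)
    · intro v hv
      rcases Finset.mem_union.1 hv with hv | hv
      · exact lf_subset_range hFr hv
      · simp only [Finset.mem_singleton] at hv
        exact Finset.mem_range.2 (by omega)
    · intro v hv
      rcases Finset.mem_union.1 hv with hv | hv
      · exact lf_disj hFd v hv
      · simp only [Finset.mem_singleton] at hv; subst hv; exact h0
    · rw [Finset.card_union_of_disjoint hdisj, lf_card, hFc, Finset.card_singleton]
      omega
    · intro v hv; simp only [Finset.mem_singleton] at hv; omega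
    · intro v hv hv1
      simp only [Finset.mem_singleton] at hv1
      have : v = 1 := by omega
      subst this
      exact Or.inl ⟨by omega, by simp⟩
  · rw [sh_card_eq hcard hlow, Finset.card_singleton]

lemma injAB {n i : ℕ} (hn : 6 ≤ n) : Set.InjOn (sh 2) (famA n i ∪ famBB n i) := by
  have key : ∀ D1 ∈ famA n i, ∀ D2 ∈ famBB n i, sh 2 D1 = sh 2 D2 → False := by
    intro D1 hD1 D2 hD2 heq
    have h3 := claimA hn hD2
    obtain ⟨⟨hDr1, ⟨hdom1, hacc1⟩, hcard1⟩, h01, h11⟩ := hD1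
    obtain ⟨⟨hDr2, ⟨hdom2, hacc2⟩, hcard2⟩, h02, h12, h22, hnacc⟩ := hD2
    have hi1 : 1 ≤ i := by rw [← hcard2]; exact Finset.card_pos.2 ⟨1, h12⟩
    have hND3 : NDom (n - 3) (sh 3 D2) := NDom_sh (by omega) hDr2 hdom2 (Or.inl h22)
    obtain ⟨E, hEr, hEd, hEc, hEdom⟩ := not_NAcc_witness hND3 hnacc
    have h0E : 0 ∉ E := fun h =>
      hEd 0 h (mem_sh.2 (show (0 : ℕ) + 3 ∈ D2 by norm_num [h3]))
    have h1E : 1 ∈ E := by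
      rcases hEdom 0 (by omega) h0E with ⟨ha, _⟩ | ⟨_, hb⟩
      · omega
      · simpa using hb
    have hhigh := sh_eq_high heq
    have hdisj : Disjoint (lf 3 E) ({1} : Finset ℕ) :=
      Finset.disjoint_singleton_right.2 (by simp [mem_lf])
    refine hacc1 (lf 3 E ∪ {1}) ?_ ?_ ?_ (NDom_lf (by omega) hEr hEdom ?_ ?_)
    · intro v hv
      rcases Finset.mem_union.1 hv with hv | hv
      · exact lf_subset_range hEr hv
      · simp only [Finset.mem_singleton] at hv
        exact Finset.mem_range.2 (by omega)
    · intro v hv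
      rcases Finset.mem_union.1 hv with hv | hv
      · intro hvD1
        have hv3 : 3 ≤ v := (mem_lf.1 hv).1
        exact lf_disj hEd v hv ((hhigh v (by omega)).1 hvD1)
      · simp only [Finset.mem_singleton] at hv; subst hv; exact h11
    · rw [Finset.card_union_of_disjoint hdisj, lf_card, hEc, Finset.card_singleton]
      omega
    · intro v hv; simp only [Finset.mem_singleton] at hv; omega
    · intro v hv hv1
      simp only [Finset.mem_singleton] at hv1
      rcases (show v = 0 ∨ v = 2 by omega) with rfl | rfl
      · exact Or.inr (Or.inl (by simp))
      · exact Or.inl ⟨by omega, by simp⟩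
  intro D1 hD1 D2 hD2 heq
  rcases hD1 with hD1 | hD1 <;> rcases hD2 with hD2 | hD2
  · refine eq_of_sh_eq heq ?_
    intro v hv
    rcases (show v = 0 ∨ v = 1 by omega) with rfl | rfl
    · exact iff_of_true hD1.2.1 hD2.2.1
    · exact iff_of_false hD1.2.2 hD2.2.2
  · exact absurd heq (fun h => key D1 hD1 D2 hD2 h)
  · exact absurd heq.symm (fun h => key D2 hD2 D1 hD1 h)
  · refine eq_of_sh_eq heq ?_
    intro v hv
    rcases (show v = 0 ∨ v = 1 by omega) with rfl | rfl
    · exact iff_of_false hD1.2.1 hD2.2.1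
    · exact iff_of_true hD1.2.2.1 hD2.2.2.1

/-! ### Family BG -/

lemma famBG_maps {n i : ℕ} :
    ∀ D ∈ famBG n i, sh 3 D ∈ AccN (n - 3) (i - 1) := by
  rintro D ⟨⟨hDr, ⟨hdom, hacc⟩, hcard⟩, h0, h1, h2, hnacc⟩
  have hlow : D.filter (fun v => ¬ 3 ≤ v) = {1} := by
    ext v
    simp only [Finset.mem_filter, Finset.mem_singleton, not_le]
    constructor
    · rintro ⟨hvD, hv⟩
      rcases (show v = 0 ∨ v = 1 ∨ v = 2 by omega) with rfl | rfl | rfl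
      · exact absurd hvD h0
      · rfl
      · exact absurd hvD h2
    · rintro rfl; exact ⟨h1, by omega⟩
  refine ⟨sh_subset_range hDr, hnacc, ?_⟩
  rw [sh_card_eq hcard hlow, Finset.card_singleton]

lemma injBG {n i : ℕ} : Set.InjOn (sh 3) (famBG n i) := by
  intro D1 hD1 D2 hD2 heq
  refine eq_of_sh_eq heq ?_
  intro v hv
  rcases (show v = 0 ∨ v = 1 ∨ v = 2 by omega) with rfl | rfl | rfl
  · exact iff_of_false hD1.2.1 hD2.2.1
  · exact iff_of_true hD1.2.2.1 hD2.2.2.1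
  · exact iff_of_false hD1.2.2.2.1 hD2.2.2.2.1

/-! ### Family C -/

lemma famC_maps {n i : ℕ} (hn : 6 ≤ n) :
    ∀ D ∈ famC n i, sh 4 D ∈ AccN (n - 4) (i - 2) := by
  rintro D ⟨⟨hDr, ⟨hdom, hacc⟩, hcard⟩, h0, h1, h2, h3⟩
  have hi2 : 2 ≤ i := by
    rw [← hcard]
    refine Finset.card_le_card ?_ (s := {1, 2})
    intro v hv
    rcases Finset.mem_insert.1 hv with rfl | hv
    · exact h1
    · simp only [Finset.mem_singleton] at hv; subst hv; exact h2
  have hlow : D.filter (fun v => ¬ 4 ≤ v) = {1, 2} := by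
    ext v
    simp only [Finset.mem_filter, Finset.mem_insert, Finset.mem_singleton, not_le]
    constructor
    · rintro ⟨hvD, hv⟩
      rcases (show v = 0 ∨ v = 1 ∨ v = 2 ∨ v = 3 by omega) with rfl | rfl | rfl | rfl
      · exact absurd hvD h0
      · exact Or.inl rfl
      · exact Or.inr rfl
      · exact absurd hvD h3
    · rintro (rfl | rfl)
      · exact ⟨h1, by omega⟩
      · exact ⟨h2, by omega⟩
  refine ⟨sh_subset_range hDr, ⟨NDom_sh (by omega) hDr hdom (Or.inl h3), ?_⟩, ?_⟩
  · intro F hFr hFd hFc hFdom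
    have hdisj : Disjoint (lf 4 F) ({0, 3} : Finset ℕ) := by
      rw [Finset.disjoint_right]
      intro v hv
      simp only [Finset.mem_insert, Finset.mem_singleton] at hv
      rcases hv with rfl | rfl <;> simp [mem_lf]
    refine hacc (lf 4 F ∪ {0, 3}) ?_ ?_ ?_ (NDom_lf (by omega) hFr hFdom ?_ ?_)
    · intro v hv
      rcases Finset.mem_union.1 hv with hv | hv
      · exact lf_subset_range hFr hv
      · simp only [Finset.mem_insert, Finset.mem_singleton] at hv
        rcases hv with rfl | rfl <;> exact Finset.mem_range.2 (by omega)
    · intro v hv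
      rcases Finset.mem_union.1 hv with hv | hv
      · exact lf_disj hFd v hv
      · simp only [Finset.mem_insert, Finset.mem_singleton] at hv
        rcases hv with rfl | rfl
        · exact h0
        · exact h3
    · rw [Finset.card_union_of_disjoint hdisj, lf_card, hFc]
      have : ({0, 3} : Finset ℕ).card = 2 := by decide
      omega
    · intro v hv
      simp only [Finset.mem_insert, Finset.mem_singleton] at hv
      omega
    · intro v hv hv1
      simp only [Finset.mem_insert, Finset.mem_singleton, not_or] at hv1
      rcases (show v = 1 ∨ v = 2 by omega) with rfl | rfl
      · exact Or.inl ⟨by omega, by simp⟩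
      · exact Or.inr (Or.inl (by simp))
  · rw [sh_card_eq hcard hlow]
    have : ({1, 2} : Finset ℕ).card = 2 := by decide
    omega

lemma injC {n i : ℕ} : Set.InjOn (sh 4) (famC n i) := by
  intro D1 hD1 D2 hD2 heq
  refine eq_of_sh_eq heq ?_
  intro v hv
  rcases (show v = 0 ∨ v = 1 ∨ v = 2 ∨ v = 3 by omega) with rfl | rfl | rfl | rfl
  · exact iff_of_false hD1.2.1 hD2.2.1
  · exact iff_of_true hD1.2.2.1 hD2.2.2.1
  · exact iff_of_true hD1.2.2.2.1 hD2.2.2.2.1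
  · exact iff_of_false hD1.2.2.2.2 hD2.2.2.2.2

/-! ### Families G1, G2 -/

lemma famG1_maps {n i k : ℕ} (hk : 3 ≤ k) (hki : k ≤ i) :
    ∀ D ∈ famG1 n i k, sh k D ∈ DomN (n - k) (i + 1 - k) := by
  rintro D ⟨⟨hDr, ⟨hdom, _⟩, hcard⟩, hpre, hgap⟩
  have hlow : D.filter (fun v => ¬ k ≤ v) = Finset.range (k - 1) := by
    ext v
    simp only [Finset.mem_filter, Finset.mem_range, not_le]
    constructor
    · rintro ⟨hvD, hv⟩
      by_contra hcon
      have : v = k - 1 := by omega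
      subst this
      exact hgap hvD
    · intro hv
      exact ⟨hpre v hv, by omega⟩
  refine ⟨sh_subset_range hDr, NDom_sh (by omega) hDr hdom (Or.inl hgap), ?_⟩
  rw [sh_card_eq hcard hlow, Finset.card_range]
  omega

lemma injG1 {n i k : ℕ} : Set.InjOn (sh k) (famG1 n i k) := by
  intro D1 hD1 D2 hD2 heq
  refine eq_of_sh_eq heq ?_
  intro v hv
  by_cases hv1 : v < k - 1
  · exact iff_of_true (hD1.2.1 v hv1) (hD2.2.1 v hv1)
  · have : v = k - 1 := by omega
    subst this
    exact iff_of_false hD1.2.2 hD2.2.2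

lemma famG2_maps {n i k : ℕ} (hk : 5 ≤ k) (hki : k ≤ i + 1) :
    ∀ D ∈ famG2 n i k, sh k D ∈ DomN (n - k) (i + 2 - k) := by
  rintro D ⟨⟨hDr, ⟨hdom, _⟩, hcard⟩, h0, hpre, hgap⟩
  have hlow : D.filter (fun v => ¬ k ≤ v) = Finset.Ico 1 (k - 1) := by
    ext v
    simp only [Finset.mem_filter, Finset.mem_Ico, not_le]
    constructor
    · rintro ⟨hvD, hv⟩
      have hv0 : 1 ≤ v := by
        rcases Nat.eq_zero_or_pos v with rfl | h
        · exact absurd hvD h0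
        · exact h
      have hvk : v < k - 1 := by
        by_contra hcon
        have : v = k - 1 := by omega
        subst this
        exact hgap hvD
      exact ⟨hv0, hvk⟩
    · rintro ⟨hv0, hvk⟩
      exact ⟨hpre v hv0 hvk, by omega⟩
  refine ⟨sh_subset_range hDr, NDom_sh (by omega) hDr hdom (Or.inl hgap), ?_⟩
  rw [sh_card_eq hcard hlow, Nat.card_Ico]
  omega

lemma injG2 {n i k : ℕ} (hk : 5 ≤ k) : Set.InjOn (sh k) (famG2 n i k) := by
  intro D1 hD1 D2 hD2 heq
  refine eq_of_sh_eq heq ?_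
  intro v hv
  rcases Nat.eq_zero_or_pos v with rfl | hv0
  · exact iff_of_false hD1.2.1 hD2.2.1
  · by_cases hv1 : v < k - 1
    · exact iff_of_true (hD1.2.2.1 v hv0 hv1) (hD2.2.2.1 v hv0 hv1)
    · have : v = k - 1 := by omega
      subst this
      exact iff_of_false hD1.2.2.2 hD2.2.2.2
/-! ### The cover -/

lemma cover {n i : ℕ} (hn : 6 ≤ n) (h1 : (n + 2) / 3 ≤ i) (h2 : i ≤ n / 2) :
    AccN n i ⊆ (famA n i ∪ famBB n i) ∪ famBG n i ∪ famC n i ∪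
      (⋃ k ∈ Finset.Icc 3 i, famG1 n i k) ∪
      (⋃ k ∈ Finset.Icc 5 (i + 1), famG2 n i k) := by
  intro D hD
  obtain ⟨hDr, ⟨hdom, hacc⟩, hcard⟩ := hD
  have hDmem : D ∈ AccN n i := ⟨hDr, ⟨hdom, hacc⟩, hcard⟩
  have hi2 : 2 ≤ i := by omega
  simp only [Set.mem_union, Set.mem_iUnion, exists_prop]
  by_cases h0 : 0 ∈ D
  · by_cases h1' : 1 ∈ D
    · -- initial run of length ≥ 2
      have hexr : ∃ m, m ∉ D := ⟨n, fun h => absurd (Finset.mem_range.1 (hDr h)) (lt_irrefl n)⟩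
      set r := Nat.find hexr with hr
      have hrD : r ∉ D := Nat.find_spec hexr
      have hrlow : ∀ j, j < r → j ∈ D := fun j hj => not_not.1 (Nat.find_min hexr hj)
      have hr2 : 2 ≤ r := by
        by_contra hcon
        rcases (show r = 0 ∨ r = 1 by omega) with hx | hx <;> rw [hx] at hrD
        · exact hrD h0
        · exact hrD h1'
      have hrsub : Finset.range r ⊆ D := fun j hj => hrlow j (Finset.mem_range.1 hj)
      have hri : r ≤ i := by
        have := Finset.card_le_card hrsub
        rwa [Finset.card_range, hcard] at this
      have hrne : r ≠ i := by
        rintro rfl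
        have hDeq : Finset.range r = D :=
          Finset.eq_of_subset_of_card_le hrsub (by rw [hcard, Finset.card_range])
        rcases hdom (r + 1) (by omega) (by rw [← hDeq]; simp) with ⟨_, hm⟩ | ⟨_, hm⟩ <;>
          rw [← hDeq] at hm <;> simp only [Finset.mem_range] at hm <;> omega
      refine Or.inl (Or.inr ⟨r + 1, Finset.mem_Icc.2 ⟨by omega, by omega⟩,
        hDmem, ?_, ?_⟩)
      · intro j hj
        exact hrlow j (by omega)
      · simpa using hrD
    · exact Or.inl (Or.inl (Or.inl (Or.inl (Or.inl ⟨hDmem, h0, h1'⟩))))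
  · have h1' : 1 ∈ D := by
      rcases hdom 0 (by omega) h0 with ⟨ha, _⟩ | ⟨_, hb⟩
      · omega
      · simpa using hb
    have hexg : ∃ m, 2 ≤ m ∧ m ∉ D :=
      ⟨n, by omega, fun h => absurd (Finset.mem_range.1 (hDr h)) (lt_irrefl n)⟩
    set g := Nat.find hexg with hg
    obtain ⟨hg2, hgD⟩ : 2 ≤ g ∧ g ∉ D := Nat.find_spec hexg
    have hglow : ∀ j, 1 ≤ j → j < g → j ∈ D := by
      intro j hj1 hjg
      rcases (show j = 1 ∨ 2 ≤ j by omega) with rfl | hj2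
      · exact h1'
      · by_contra hcon
        exact Nat.find_min hexg hjg ⟨hj2, hcon⟩
    rcases (show g = 2 ∨ g = 3 ∨ 4 ≤ g by omega) with hgx | hgx | hgx
    · -- family B
      have h2' : 2 ∉ D := by rw [← hgx]; exact hgD
      by_cases hbg : NAcc (n - 3) (i - 1) (sh 3 D)
      · exact Or.inl (Or.inl (Or.inl (Or.inr ⟨hDmem, h0, h1', h2', hbg⟩)))
      · exact Or.inl (Or.inl (Or.inl (Or.inl (Or.inr ⟨hDmem, h0, h1', h2', hbg⟩))))
    · -- family C
      have h2' : 2 ∈ D := hglow 2 (by omega) (by omega)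
      have h3' : 3 ∉ D := by rw [← hgx]; exact hgD
      exact Or.inl (Or.inl (Or.inr ⟨hDmem, h0, h1', h2', h3'⟩))
    · -- family G2
      have hIco : Finset.Ico 1 g ⊆ D := fun j hj => by
        have := Finset.mem_Ico.1 hj
        exact hglow j this.1 this.2
      have hgi' : g - 1 ≤ i := by
        have := Finset.card_le_card hIco
        rwa [Nat.card_Ico, hcard] at this
      have hgne : g ≠ i + 1 := by
        intro hgeq
        have hIco' : Finset.Ico 1 (i + 1) ⊆ D := hgeq ▸ hIco
        have hDeq : Finset.Ico 1 (i + 1) = D :=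
          Finset.eq_of_subset_of_card_le hIco' (by rw [hcard, Nat.card_Ico]; omega)
        have hi3 : 3 ≤ i := by omega
        rcases hdom (i + 2) (by omega) (by rw [← hDeq]; simp) with ⟨_, hm⟩ | ⟨_, hm⟩ <;>
          rw [← hDeq] at hm <;> simp only [Finset.mem_Ico] at hm <;> omega
      refine Or.inr ⟨g + 1, Finset.mem_Icc.2 ⟨by omega, by omega⟩, hDmem, h0, ?_, ?_⟩
      · intro j hj1 hj2
        exact hglow j hj1 (by omega)
      · simpa using hgD

/-! ### Counting -/

lemma finite_of_subsets_range {P : Set (Finset ℕ)} {n : ℕ}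
    (h : ∀ D ∈ P, D ⊆ Finset.range n) : P.Finite := by
  refine Set.Finite.subset ((Finset.range n).powerset : Finset (Finset ℕ)).finite_toSet ?_
  intro D hD
  exact Finset.mem_coe.2 (Finset.mem_powerset.2 (h D hD))

lemma finite_AccN (m j : ℕ) : (AccN m j).Finite :=
  finite_of_subsets_range (fun _ hD => hD.1)

lemma finite_DomN (m j : ℕ) : (DomN m j).Finite :=
  finite_of_subsets_range (fun _ hD => hD.1)

lemma ncard_biUnion_le {α : Type*} (f : ℕ → Set α) :
    ∀ s : Finset ℕ, (∀ k ∈ s, (f k).Finite) →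
      (⋃ k ∈ (s : Set ℕ), f k).ncard ≤ ∑ k ∈ s, (f k).ncard := by
  intro s
  induction s using Finset.induction_on with
  | empty => intro _; simp
  | @insert a s ha ih =>
    intro hf
    rw [Finset.sum_insert ha]
    have hset : (⋃ k ∈ ((insert a s : Finset ℕ) : Set ℕ), f k)
        = f a ∪ ⋃ k ∈ (s : Set ℕ), f k := by
      simp [Set.biUnion_insert]
    rw [hset]
    exact le_trans (Set.ncard_union_le _ _)
      (Nat.add_le_add_left (ih (fun k hk => hf k (Finset.mem_insert_of_mem hk))) _)

theorem mainN {n i : ℕ} (hn : 6 ≤ n) (h1 : (n + 2) / 3 ≤ i) (h2 : i ≤ n / 2) :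
    (AccN n i).ncard ≤ (AccN (n - 2) (i - 1)).ncard + (AccN (n - 3) (i - 1)).ncard +
      (AccN (n - 4) (i - 2)).ncard +
      (∑ k ∈ Finset.Icc 3 i, (DomN (n - k) (i + 1 - k)).ncard) +
      (∑ k ∈ Finset.Icc 5 (i + 1), (DomN (n - k) (i + 2 - k)).ncard) := by
  have hfasub : famA n i ∪ famBB n i ⊆ AccN n i := by
    rintro D (hD | hD) <;> exact hD.1
  have hfa : (famA n i ∪ famBB n i).Finite := (finite_AccN n i).subset hfasub
  have hbg : (famBG n i).Finite := (finite_AccN n i).subset (fun D hD => hD.1)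
  have hc : (famC n i).Finite := (finite_AccN n i).subset (fun D hD => hD.1)
  have hg1 : ∀ k, (famG1 n i k).Finite :=
    fun k => (finite_AccN n i).subset (fun D hD => hD.1)
  have hg2 : ∀ k, (famG2 n i k).Finite :=
    fun k => (finite_AccN n i).subset (fun D hD => hD.1)
  have hU1 : (⋃ k ∈ (Finset.Icc 3 i : Set ℕ), famG1 n i k).Finite :=
    Set.Finite.biUnion (Finset.Icc 3 i).finite_toSet (fun k _ => hg1 k)
  have hU2 : (⋃ k ∈ (Finset.Icc 5 (i + 1) : Set ℕ), famG2 n i k).Finite :=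
    Set.Finite.biUnion (Finset.Icc 5 (i + 1)).finite_toSet (fun k _ => hg2 k)
  have hcov := cover hn h1 h2
  have step0 : (AccN n i).ncard ≤
      ((famA n i ∪ famBB n i) ∪ famBG n i ∪ famC n i ∪
        (⋃ k ∈ (Finset.Icc 3 i : Set ℕ), famG1 n i k) ∪
        (⋃ k ∈ (Finset.Icc 5 (i + 1) : Set ℕ), famG2 n i k)).ncard := by
    refine Set.ncard_le_ncard ?_ ?_
    · intro D hD
      have := hcov hD
      simpa using this
    · exact ((((hfa.union hbg).union hc).union hU1).union hU2)
  have e5 := Set.ncard_union_le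
    ((famA n i ∪ famBB n i) ∪ famBG n i ∪ famC n i ∪
      (⋃ k ∈ (Finset.Icc 3 i : Set ℕ), famG1 n i k))
    (⋃ k ∈ (Finset.Icc 5 (i + 1) : Set ℕ), famG2 n i k)
  have e4 := Set.ncard_union_le ((famA n i ∪ famBB n i) ∪ famBG n i ∪ famC n i)
    (⋃ k ∈ (Finset.Icc 3 i : Set ℕ), famG1 n i k)
  have e3 := Set.ncard_union_le ((famA n i ∪ famBB n i) ∪ famBG n i) (famC n i)
  have e2 := Set.ncard_union_le (famA n i ∪ famBB n i) (famBG n i)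
  have b1 : (famA n i ∪ famBB n i).ncard ≤ (AccN (n - 2) (i - 1)).ncard := by
    refine Set.ncard_le_ncard_of_injOn (sh 2) ?_ (injAB hn) (finite_AccN _ _)
    rintro D (hD | hD)
    · exact famA_maps hn D hD
    · exact famBB_maps hn D hD
  have b2 : (famBG n i).ncard ≤ (AccN (n - 3) (i - 1)).ncard :=
    Set.ncard_le_ncard_of_injOn (sh 3) (famBG_maps) injBG (finite_AccN _ _)
  have b3 : (famC n i).ncard ≤ (AccN (n - 4) (i - 2)).ncard :=
    Set.ncard_le_ncard_of_injOn (sh 4) (famC_maps hn) injC (finite_AccN _ _)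
  have b4 : (⋃ k ∈ (Finset.Icc 3 i : Set ℕ), famG1 n i k).ncard ≤
      ∑ k ∈ Finset.Icc 3 i, (DomN (n - k) (i + 1 - k)).ncard := by
    refine le_trans (ncard_biUnion_le _ _ (fun k _ => hg1 k)) ?_
    refine Finset.sum_le_sum ?_
    intro k hk
    obtain ⟨hk3, hki⟩ := Finset.mem_Icc.1 hk
    exact Set.ncard_le_ncard_of_injOn (sh k) (famG1_maps hk3 hki) injG1 (finite_DomN _ _)
  have b5 : (⋃ k ∈ (Finset.Icc 5 (i + 1) : Set ℕ), famG2 n i k).ncard ≤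
      ∑ k ∈ Finset.Icc 5 (i + 1), (DomN (n - k) (i + 2 - k)).ncard := by
    refine le_trans (ncard_biUnion_le _ _ (fun k _ => hg2 k)) ?_
    refine Finset.sum_le_sum ?_
    intro k hk
    obtain ⟨hk5, hki⟩ := Finset.mem_Icc.1 hk
    exact Set.ncard_le_ncard_of_injOn (sh k) (famG2_maps hk5 hki) (injG2 hk5) (finite_DomN _ _)
  omega

end PathAcc

/-- Upper bound for the number of accurate dominating sets of the path `P_n` of
cardinality `i`, for `⌈n/3⌉ ≤ i ≤ ⌊n/2⌋`. -/
theorem path_numAccDomSets_upper (n i : ℕ) (hn : 6 ≤ n)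
    (h1 : (n + 2) / 3 ≤ i) (h2 : i ≤ n / 2) :
    numAccDomSets (SimpleGraph.pathGraph n) i ≤
      numAccDomSets (SimpleGraph.pathGraph (n - 2)) (i - 1) +
      numAccDomSets (SimpleGraph.pathGraph (n - 3)) (i - 1) +
      numAccDomSets (SimpleGraph.pathGraph (n - 4)) (i - 2) +
      (∑ k ∈ Finset.Icc 3 i, numDomSets (SimpleGraph.pathGraph (n - k)) (i + 1 - k)) +
      (∑ k ∈ Finset.Icc 5 (i + 1), numDomSets (SimpleGraph.pathGraph (n - k)) (i + 2 - k)) := by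
  
  rw [PathAcc.numAccDomSets_eq, PathAcc.numAccDomSets_eq, PathAcc.numAccDomSets_eq,
    PathAcc.numAccDomSets_eq]
  have hs1 : ∑ k ∈ Finset.Icc 3 i, numDomSets (SimpleGraph.pathGraph (n - k)) (i + 1 - k)
      = ∑ k ∈ Finset.Icc 3 i, (PathAcc.DomN (n - k) (i + 1 - k)).ncard :=
    Finset.sum_congr rfl (fun k _ => PathAcc.numDomSets_eq _ _)
  have hs2 : ∑ k ∈ Finset.Icc 5 (i + 1), numDomSets (SimpleGraph.pathGraph (n - k)) (i + 2 - k)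
      = ∑ k ∈ Finset.Icc 5 (i + 1), (PathAcc.DomN (n - k) (i + 2 - k)).ncard :=
    Finset.sum_congr rfl (fun k _ => PathAcc.numDomSets_eq _ _)
  rw [hs1, hs2]
  exact PathAcc.mainN hn h1 h2
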